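/- McDiarmid's (bounded differences) inequality: Let X₁, …, Xₘ be independent random variables taking values in a measurable space χ, and let f : χᵐ → ℝ be a measurable function satisfying the bounded differences condition: for every i and all x₁, …, xₘ, xᵢ′ ∈ χ, |f(x₁, …, xᵢ, …, xₘ) − f(x₁, …, xᵢ′, …, xₘ)| ≤ cᵢ. Then for every ε > 0, P( f(X₁, …, Xₘ) − E[f(X₁, …, Xₘ)] ≥ ε ) ≤ exp( −2ε² / Σᵢ₌₁ᵐ cᵢ² ). -/

import Mathlib

open MeasureTheory ProbabilityTheory Real


lemma psi_le (p : ℝ) (hp0 : 0 ≤ p) (hp1 : p ≤ 1) (u : ℝ) :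
    Real.log (1 - p + p * Real.exp u) ≤ p * u + u ^ 2 / 8 := by
  have hA : ∀ v : ℝ, 0 < 1 - p + p * Real.exp v := by
    intro v
    rcases lt_or_eq_of_le hp1 with h | h
    · have : 0 ≤ p * Real.exp v := mul_nonneg hp0 (exp_pos v).le
      linarith
    · subst h; simpa using exp_pos v
  set g : ℝ → ℝ := fun v => p * v + v ^ 2 / 8 - Real.log (1 - p + p * Real.exp v) with hg
  set g' : ℝ → ℝ := fun v => p + v / 4 - p * Real.exp v / (1 - p + p * Real.exp v) with hg'
  have hdg : ∀ v, HasDerivAt g (g' v) v := by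
    intro v
    have hA' : HasDerivAt (fun v : ℝ => 1 - p + p * Real.exp v) (p * Real.exp v) v :=
      ((Real.hasDerivAt_exp v).const_mul p).const_add (1 - p)
    have hlog : HasDerivAt (fun v : ℝ => Real.log (1 - p + p * Real.exp v))
        (p * Real.exp v / (1 - p + p * Real.exp v)) v := hA'.log (hA v).ne'
    have h1 : HasDerivAt (fun v : ℝ => p * v + v ^ 2 / 8) (p + 2 * v / 8) v := by
      have := ((hasDerivAt_pow 2 v).div_const 8).const_add 0
      have h2 : HasDerivAt (fun v : ℝ => p * v) p v := by
        simpa using (hasDerivAt_id v).const_mul p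
      simpa [pow_one, Pi.add_def] using h2.add ((hasDerivAt_pow 2 v).div_const 8)
    have := h1.sub hlog
    exact this.congr_deriv (by simp only [hg']; ring)
  have hdg' : ∀ v, HasDerivAt g' (1 / 4 - p * Real.exp v * (1 - p) / (1 - p + p * Real.exp v) ^ 2) v := by
    intro v
    have hA' : HasDerivAt (fun v : ℝ => 1 - p + p * Real.exp v) (p * Real.exp v) v :=
      ((Real.hasDerivAt_exp v).const_mul p).const_add (1 - p)
    have hN : HasDerivAt (fun v : ℝ => p * Real.exp v) (p * Real.exp v) v :=
      (Real.hasDerivAt_exp v).const_mul p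
    have hq : HasDerivAt (fun v : ℝ => p * Real.exp v / (1 - p + p * Real.exp v))
        ((p * Real.exp v * (1 - p + p * Real.exp v) - p * Real.exp v * (p * Real.exp v)) /
          (1 - p + p * Real.exp v) ^ 2) v := hN.div hA' (hA v).ne'
    have h1 : HasDerivAt (fun v : ℝ => p + v / 4) (1 / 4) v := by
      simpa using ((hasDerivAt_id v).div_const 4).const_add p
    have := h1.sub hq
    exact this.congr_deriv (by ring)
  have hg'0 : g' 0 = 0 := by
    simp only [hg', Real.exp_zero, mul_one]
    have : 1 - p + p = 1 := by ring
    rw [this]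
    ring
  have hg0 : g 0 = 0 := by
    simp only [hg, Real.exp_zero, mul_one]
    have : 1 - p + p = 1 := by ring
    rw [this, Real.log_one]
    ring
  have hmono : Monotone g' := by
    apply monotone_of_deriv_nonneg
    · exact fun v => (hdg' v).differentiableAt
    · intro v
      rw [(hdg' v).deriv]
      have h1 : p * Real.exp v * (1 - p) ≤ (1 - p + p * Real.exp v) ^ 2 / 4 := by
        nlinarith [sq_nonneg (1 - p - p * Real.exp v), (exp_pos v).le, hp0, hp1]
      have h2 : (0:ℝ) < (1 - p + p * Real.exp v) ^ 2 := pow_pos (hA v) 2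
      rw [sub_nonneg, div_le_iff₀ h2]
      linarith
  have key : 0 ≤ g u := by
    rcases le_total 0 u with h | h
    · have : MonotoneOn g (Set.Ici 0) := by
        apply monotoneOn_of_deriv_nonneg (convex_Ici 0)
        · exact fun v _ => ((hdg v).differentiableAt).continuousAt.continuousWithinAt
        · intro v hv
          exact ((hdg v).differentiableAt).differentiableWithinAt
        · intro v hv
          rw [(hdg v).deriv]
          have := hmono (le_of_lt (by simpa using hv) : (0:ℝ) ≤ v)
          rw [hg'0] at this
          exact this
      have := this (Set.self_mem_Ici) (Set.mem_Ici.2 h) h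
      rwa [hg0] at this
    · have : AntitoneOn g (Set.Iic 0) := by
        apply antitoneOn_of_deriv_nonpos (convex_Iic 0)
        · exact fun v _ => ((hdg v).differentiableAt).continuousAt.continuousWithinAt
        · intro v hv
          exact ((hdg v).differentiableAt).differentiableWithinAt
        · intro v hv
          rw [(hdg v).deriv]
          have := hmono (le_of_lt (by simpa using hv) : v ≤ 0)
          rw [hg'0] at this
          exact this
      have := this (Set.mem_Iic.2 h) (Set.self_mem_Iic) h
      rwa [hg0] at this
  simp only [hg] at key
  linarith

lemma exp_convex_bound {a b x t : ℝ} (hab : a < b) (hax : a ≤ x) (hxb : x ≤ b) :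
    Real.exp (t * x) ≤ ((b - x) * Real.exp (t * a) + (x - a) * Real.exp (t * b)) / (b - a) := by
  have hba : (0:ℝ) < b - a := by linarith
  have h1 : (0:ℝ) ≤ (b - x) / (b - a) := div_nonneg (by linarith) hba.le
  have h2 : (0:ℝ) ≤ (x - a) / (b - a) := div_nonneg (by linarith) hba.le
  have h3 : (b - x) / (b - a) + (x - a) / (b - a) = 1 := by field_simp; ring
  have := convexOn_exp.2 (Set.mem_univ (t * a)) (Set.mem_univ (t * b)) h1 h2 h3
  have harg : (b - x) / (b - a) * (t * a) + (x - a) / (b - a) * (t * b) = t * x := by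
    field_simp; ring
  simp only [smul_eq_mul] at this
  rw [harg] at this
  calc Real.exp (t * x) ≤ (b - x) / (b - a) * Real.exp (t * a) + (x - a) / (b - a) * Real.exp (t * b) := this
    _ = ((b - x) * Real.exp (t * a) + (x - a) * Real.exp (t * b)) / (b - a) := by ring

lemma integrable_of_bounded' {α : Type*} [MeasurableSpace α] {ν : Measure α}
    [IsFiniteMeasure ν] {g : α → ℝ} (hg : Measurable g) {C : ℝ} (hC : ∀ x, |g x| ≤ C) :
    Integrable g ν :=
  ⟨hg.aestronglyMeasurable, HasFiniteIntegral.of_bounded (C := C) (ae_of_all _ hC)⟩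

/-- Hoeffding's lemma, oscillation form. -/
lemma hoeffding_osc {χ : Type*} [MeasurableSpace χ] [Nonempty χ] (ν : Measure χ)
    [IsProbabilityMeasure ν] (g : χ → ℝ) (hg : Measurable g) (c : ℝ) (hc : 0 ≤ c)
    (hosc : ∀ z z', |g z - g z'| ≤ c) (t : ℝ) :
    ∫ z, Real.exp (t * g z) ∂ν ≤ Real.exp (t * ∫ z, g z ∂ν + t ^ 2 * c ^ 2 / 8) := by
  obtain ⟨z₀⟩ := ‹Nonempty χ›
  have hbdd : BddBelow (Set.range g) := by
    refine ⟨g z₀ - c, ?_⟩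
    rintro _ ⟨z, rfl⟩
    have := hosc z₀ z
    have := abs_le.1 this
    linarith [this.2]
  set a : ℝ := ⨅ z, g z with ha
  have hag : ∀ z, a ≤ g z := fun z => ciInf_le hbdd z
  have hgb : ∀ z, g z ≤ a + c := by
    intro z
    have : g z - c ≤ a := le_ciInf (fun z' => by
      have := abs_le.1 (hosc z z'); linarith [this.2])
    linarith
  set b : ℝ := a + c with hb
  -- bound on |g|
  have hgabs : ∀ z, |g z| ≤ |a| + c := by
    intro z
    rw [abs_le]
    constructor
    · linarith [hag z, neg_abs_le a]
    · linarith [hgb z, le_abs_self a]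
  have hgint : Integrable g ν := integrable_of_bounded' hg hgabs
  set M : ℝ := ∫ z, g z ∂ν with hM
  have haM : a ≤ M := by
    have : ∫ _ : χ, a ∂ν ≤ ∫ z, g z ∂ν :=
      integral_mono (integrable_const a) hgint hag
    simpa using this
  have hMb : M ≤ b := by
    have : ∫ z, g z ∂ν ≤ ∫ _ : χ, b ∂ν :=
      integral_mono hgint (integrable_const b) hgb
    simpa using this
  have hexpint : ∀ (s : ℝ), Integrable (fun z => Real.exp (s * g z)) ν := by
    intro s
    refine integrable_of_bounded' (by measurability) (C := Real.exp (|s| * (|a| + c))) ?_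
    intro z
    rw [abs_of_nonneg (exp_pos _).le, Real.exp_le_exp]
    calc s * g z ≤ |s * g z| := le_abs_self _
      _ = |s| * |g z| := abs_mul s _
      _ ≤ |s| * (|a| + c) := by
          exact mul_le_mul_of_nonneg_left (hgabs z) (abs_nonneg s)
  rcases eq_or_lt_of_le hc with hc0 | hc0
  · -- c = 0 : g constant = a
    have hgz : ∀ z, g z = a := fun z => le_antisymm (by have := hgb z; rw [hb, ← hc0] at this; linarith) (hag z)
    have hMa : M = a := by
      rw [hM]; simp_rw [fun z => hgz z]; simp
    calc ∫ z, Real.exp (t * g z) ∂ν = ∫ _ : χ, Real.exp (t * a) ∂ν := by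
          congr 1; funext z; rw [hgz z]
      _ = Real.exp (t * a) := by simp
      _ ≤ Real.exp (t * M + t ^ 2 * c ^ 2 / 8) := by
          rw [Real.exp_le_exp, hMa, ← hc0]; nlinarith [sq_nonneg t]
  · -- c > 0, so a < b. Work with centered h := g - M.
    have hab : a < b := by simpa [hb] using hc0
    set a' : ℝ := a - M with ha'
    set b' : ℝ := b - M with hb'
    have ha'0 : a' ≤ 0 := sub_nonpos.2 haM
    have hb'0 : 0 ≤ b' := sub_nonneg.2 hMb
    have hb'a' : b' - a' = c := by simp only [ha', hb', hb]; ring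
    have hab' : a' < b' := by rw [ha', hb']; linarith
    have hφint : Integrable (fun z => g z - M) ν := hgint.sub (integrable_const M)
    have hcent : ∫ z, (g z - M) ∂ν = 0 := by
      rw [integral_sub hgint (integrable_const M)]; simp [hM]
    set E1 : ℝ := Real.exp (t * a') with hE1
    set E2 : ℝ := Real.exp (t * b') with hE2
    have h1int : Integrable (fun z => Real.exp (t * (g z - M))) ν := by
      refine ((hexpint t).mul_const (Real.exp (-(t * M)))).congr (ae_of_all _ fun z => ?_)
      show Real.exp (t * g z) * Real.exp (-(t * M)) = Real.exp (t * (g z - M))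
      rw [← Real.exp_add]; ring_nf
    have hrw : ∀ z, ((b' - (g z - M)) * E1 + ((g z - M) - a') * E2) / c
        = (b' * E1 - a' * E2) / c + (g z - M) * ((E2 - E1) / c) := by
      intro z; field_simp; ring
    have step1 : ∫ z, Real.exp (t * (g z - M)) ∂ν ≤ (b' * E1 - a' * E2) / c := by
      have hRint : Integrable
          (fun z => (b' * E1 - a' * E2) / c + (g z - M) * ((E2 - E1) / c)) ν :=
        (integrable_const _).add (hφint.mul_const _)
      calc ∫ z, Real.exp (t * (g z - M)) ∂ν
          ≤ ∫ z, ((b' * E1 - a' * E2) / c + (g z - M) * ((E2 - E1) / c)) ∂ν := by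
            refine integral_mono h1int hRint fun z => ?_
            rw [← hrw z]
            have h := exp_convex_bound (a := a') (b := b') (x := g z - M) (t := t) hab'
              (by rw [ha']; linarith [hag z]) (by rw [hb']; linarith [hgb z])
            rw [hb'a'] at h
            exact h
        _ = (b' * E1 - a' * E2) / c := by
            rw [integral_add (integrable_const _) (hφint.mul_const _),
              integral_mul_const, hcent, integral_const]
            simp
    have hfinal : (b' * E1 - a' * E2) / c ≤ Real.exp (t ^ 2 * c ^ 2 / 8) := by
      set p : ℝ := -a' / c with hp
      set u : ℝ := t * c with hu
      have hp0 : 0 ≤ p := div_nonneg (by linarith) hc0.le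
      have hp1 : p ≤ 1 := by
        rw [hp, div_le_one hc0]; linarith [hb'0, hb'a']
      have hpa : a' = -(p * c) := by rw [hp]; field_simp
      have hpb : b' = (1 - p) * c := by
        have : b' = a' + c := by linarith [hb'a']
        rw [this, hpa]; ring
      have hE1' : E1 = Real.exp (-(p * u)) := by rw [hE1, hpa, hu]; ring_nf
      have hE2' : E2 = Real.exp (-(p * u)) * Real.exp u := by
        rw [hE2, hpb, hu, ← Real.exp_add]; ring_nf
      have heq : (b' * E1 - a' * E2) / c
          = Real.exp (-(p * u)) * (1 - p + p * Real.exp u) := by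
        rw [hE1', hE2', hpa, hpb]; field_simp; ring
      rw [heq]
      have hApos : 0 < 1 - p + p * Real.exp u := by
        rcases lt_or_eq_of_le hp1 with h | h
        · have : 0 ≤ p * Real.exp u := mul_nonneg hp0 (exp_pos u).le
          linarith
        · rw [h]; simpa using exp_pos u
      have hlog := psi_le p hp0 hp1 u
      have hAle : 1 - p + p * Real.exp u ≤ Real.exp (p * u + u ^ 2 / 8) :=
        (Real.log_le_iff_le_exp hApos).1 hlog
      calc Real.exp (-(p * u)) * (1 - p + p * Real.exp u)
          ≤ Real.exp (-(p * u)) * Real.exp (p * u + u ^ 2 / 8) := by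
            exact mul_le_mul_of_nonneg_left hAle (exp_pos _).le
        _ = Real.exp (u ^ 2 / 8) := by rw [← Real.exp_add]; ring_nf
        _ = Real.exp (t ^ 2 * c ^ 2 / 8) := by rw [hu]; ring_nf
    calc ∫ z, Real.exp (t * g z) ∂ν
        = ∫ z, Real.exp (t * M) * Real.exp (t * (g z - M)) ∂ν := by
          congr 1; funext z; rw [← Real.exp_add]; ring_nf
      _ = Real.exp (t * M) * ∫ z, Real.exp (t * (g z - M)) ∂ν := integral_const_mul _ _
      _ ≤ Real.exp (t * M) * Real.exp (t ^ 2 * c ^ 2 / 8) := by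
          refine mul_le_mul_of_nonneg_left (le_trans step1 hfinal) (exp_pos _).le
      _ = Real.exp (t * M + t ^ 2 * c ^ 2 / 8) := by rw [← Real.exp_add]

lemma osc_global {χ : Type*} : ∀ (m : ℕ) (f : (Fin m → χ) → ℝ) (c : Fin m → ℝ),
    (∀ (i : Fin m) (x : Fin m → χ) (x' : χ), |f x - f (Function.update x i x')| ≤ c i) →
    ∀ x y : Fin m → χ, |f x - f y| ≤ ∑ i, c i := by
  intro m
  induction m with
  | zero =>
    intro f c hbd x y
    have : x = y := Subsingleton.elim x y
    simp [this]
  | succ n ih =>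
    intro f c hbd x y
    have hx : Fin.cons (x 0) (Fin.tail x) = x := Fin.cons_self_tail x
    have hy : Fin.cons (y 0) (Fin.tail y) = y := Fin.cons_self_tail y
    have h1 : |f x - f (Fin.cons (y 0) (Fin.tail x))| ≤ c 0 := by
      have := hbd 0 x (y 0)
      have hupd : Function.update x 0 (y 0) = Fin.cons (y 0) (Fin.tail x) := by
        rw [← hx, Fin.update_cons_zero, Fin.tail_cons]
      rwa [hupd] at this
    have h2 : |f (Fin.cons (y 0) (Fin.tail x)) - f y| ≤ ∑ j : Fin n, c j.succ := by
      have := ih (fun w => f (Fin.cons (y 0) w)) (fun j => c j.succ)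
        (fun j w v => by
          have hupd : (Fin.cons (y 0) (Function.update w j v) : Fin (n+1) → χ)
              = Function.update (Fin.cons (y 0) w : Fin (n+1) → χ) j.succ v := by
            exact @Fin.cons_update n (fun _ : Fin (n+1) => χ) (y 0) w j v
          simpa [hupd] using hbd j.succ (Fin.cons (y 0) w) v)
        (Fin.tail x) (Fin.tail y)
      rwa [hy] at this
    calc |f x - f y| ≤ |f x - f (Fin.cons (y 0) (Fin.tail x))|
          + |f (Fin.cons (y 0) (Fin.tail x)) - f y| := abs_sub_le _ _ _
      _ ≤ c 0 + ∑ j : Fin n, c j.succ := add_le_add h1 h2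
      _ = ∑ i, c i := (Fin.sum_univ_succ c).symm

lemma abs_int_le {α : Type*} [MeasurableSpace α] {ν : Measure α} (g : α → ℝ) :
    |∫ x, g x ∂ν| ≤ ∫ x, |g x| ∂ν := by
  simpa [Real.norm_eq_abs] using norm_integral_le_integral_norm (μ := ν) g

lemma mgf_pi {χ : Type*} [MeasurableSpace χ] [Nonempty χ] :
    ∀ (m : ℕ) (ν : Fin m → Measure χ), (∀ i, IsProbabilityMeasure (ν i)) →
    ∀ (f : (Fin m → χ) → ℝ), Measurable f → ∀ (c : Fin m → ℝ), (∀ i, 0 ≤ c i) →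
    (∀ (i : Fin m) (x : Fin m → χ) (x' : χ), |f x - f (Function.update x i x')| ≤ c i) →
    ∀ t : ℝ,
    ∫ x, Real.exp (t * f x) ∂(Measure.pi ν) ≤
      Real.exp (t * ∫ x, f x ∂(Measure.pi ν) + t ^ 2 * (∑ i, c i ^ 2) / 8) := by
  intro m
  induction m with
  | zero =>
    intro ν hν f hf c hc hbd t
    haveI := fun i => hν i
    haveI : IsProbabilityMeasure (Measure.pi ν) := by infer_instance
    have hconst : ∀ x : Fin 0 → χ, f x = f (fun i => i.elim0) := by
      intro x; congr 1; exact Subsingleton.elim _ _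
    rw [show (fun x : Fin 0 → χ => Real.exp (t * f x))
        = fun _ => Real.exp (t * f (fun i => i.elim0)) from funext fun x => by rw [hconst x]]
    rw [show (fun x : Fin 0 → χ => f x) = fun _ => f (fun i => i.elim0) from
      funext fun x => by rw [hconst x]]
    simp [integral_const]
  | succ n ih =>
    intro ν hν f hf c hc hbd t
    haveI := fun i => hν i
    obtain ⟨z₀⟩ := ‹Nonempty χ›
    set x₀ : Fin (n+1) → χ := fun _ => z₀ with hx₀
    set B : ℝ := |f x₀| + ∑ i, c i with hB
    have hfB : ∀ x, |f x| ≤ B := by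
      intro x
      have := osc_global (n+1) f c hbd x x₀
      calc |f x| ≤ |f x - f x₀| + |f x₀| := by
            have := abs_sub_abs_le_abs_sub (f x) (f x₀); linarith [abs_sub_le (f x) (f x₀) 0]
        _ ≤ ∑ i, c i + |f x₀| := by linarith
        _ = B := by rw [hB]; ring
    -- the equivalence peeling off coordinate 0
    set ν0 : Measure χ := ν 0 with hν0
    set νt : (j : Fin n) → Measure χ := fun j => ν j.succ with hνt
    set πt : Measure (Fin n → χ) := Measure.pi νt with hπt
    haveI : IsProbabilityMeasure ν0 := hν 0
    haveI : ∀ j, IsProbabilityMeasure (νt j) := fun j => hν j.succ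
    haveI : IsProbabilityMeasure πt := by rw [hπt]; infer_instance
    have hmp : MeasurePreserving (MeasurableEquiv.piFinSuccAbove (fun _ : Fin (n+1) => χ) 0)
        (Measure.pi ν) (ν0.prod πt) :=
      measurePreserving_piFinSuccAbove ν 0
    have hmps : MeasurePreserving
        (MeasurableEquiv.piFinSuccAbove (fun _ : Fin (n+1) => χ) 0).symm
        (ν0.prod πt) (Measure.pi ν) := hmp.symm _
    have hsymm : ∀ p : χ × (Fin n → χ),
        (MeasurableEquiv.piFinSuccAbove (fun _ : Fin (n+1) => χ) 0).symm p
          = Fin.cons p.1 p.2 := by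
      intro p
      show (Fin.insertNthEquiv (fun _ : Fin (n+1) => χ) 0) p = _
      rw [Fin.insertNthEquiv_zero]
      rfl
    -- transport integrals to the product measure
    have hcons_meas : Measurable (fun p : χ × (Fin n → χ) => (Fin.cons p.1 p.2 : Fin (n+1) → χ)) := by
      have h := (MeasurableEquiv.piFinSuccAbove (fun _ : Fin (n+1) => χ) 0).symm.measurable
      rwa [show ((MeasurableEquiv.piFinSuccAbove (fun _ : Fin (n+1) => χ) 0).symm : χ × (Fin n → χ) → (Fin (n+1) → χ)) = fun p => Fin.cons p.1 p.2 from funext hsymm] at h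
    have hB0 : 0 ≤ B := by
      have := abs_nonneg (f x₀)
      have : (0:ℝ) ≤ ∑ i, c i := Finset.sum_nonneg fun i _ => hc i
      positivity
    -- transport integrals to the product measure
    have htrans : ∀ G : (Fin (n+1) → χ) → ℝ,
        ∫ x, G x ∂(Measure.pi ν) = ∫ p, G (Fin.cons p.1 p.2) ∂(ν0.prod πt) := by
      intro G
      rw [← hmps.integral_comp
        (MeasurableEquiv.piFinSuccAbove (fun _ : Fin (n+1) => χ) 0).symm.measurableEmbedding G]
      congr 1
      funext p
      rw [hsymm p]
    have hfmeas' : Measurable (fun p : χ × (Fin n → χ) => f (Fin.cons p.1 p.2)) :=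
      hf.comp hcons_meas
    have hfInt : Integrable (fun p : χ × (Fin n → χ) => f (Fin.cons p.1 p.2)) (ν0.prod πt) :=
      integrable_of_bounded' hfmeas' (fun p => hfB _)
    have hExpInt : Integrable
        (fun p : χ × (Fin n → χ) => Real.exp (t * f (Fin.cons p.1 p.2))) (ν0.prod πt) := by
      refine integrable_of_bounded' ((hfmeas'.const_mul t).exp)
        (C := Real.exp (|t| * B)) fun p => ?_
      rw [abs_of_nonneg (exp_pos _).le, Real.exp_le_exp]
      calc t * f (Fin.cons p.1 p.2) ≤ |t * f (Fin.cons p.1 p.2)| := le_abs_self _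
        _ = |t| * |f (Fin.cons p.1 p.2)| := abs_mul _ _
        _ ≤ |t| * B := mul_le_mul_of_nonneg_left (hfB _) (abs_nonneg t)
    -- the partially integrated function
    set h : (Fin n → χ) → ℝ := fun y => ∫ z, f (Fin.cons z y) ∂ν0 with hh
    have hinner_meas : ∀ y : Fin n → χ, Measurable (fun z : χ => f (Fin.cons z y)) := by
      intro y
      exact hfmeas'.comp (measurable_id.prodMk measurable_const)
    have hinner_int : ∀ y : Fin n → χ, Integrable (fun z : χ => f (Fin.cons z y)) ν0 :=
      fun y => integrable_of_bounded' (hinner_meas y) (fun z => hfB _)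
    have hhmeas : Measurable h := by
      have hFsm : StronglyMeasurable
          (fun q : (Fin n → χ) × χ => f (Fin.cons q.2 q.1)) := by
        exact (hfmeas'.comp (measurable_snd.prodMk measurable_fst)).stronglyMeasurable
      exact hFsm.integral_prod_right'.measurable
    have hhB : ∀ y, |h y| ≤ B := by
      intro y
      calc |h y| ≤ ∫ z, |f (Fin.cons z y)| ∂ν0 := abs_int_le _
        _ ≤ ∫ _ : χ, B ∂ν0 := integral_mono (hinner_int y).abs (integrable_const B)
            (fun z => hfB _)
        _ = B := by simp
    -- Hoeffding on the inner integral
    set K0 : ℝ := t ^ 2 * (c 0) ^ 2 / 8 with hK0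
    have hstepA : ∀ y : Fin n → χ,
        ∫ z, Real.exp (t * f (Fin.cons z y)) ∂ν0 ≤ Real.exp (t * h y + K0) := by
      intro y
      refine hoeffding_osc ν0 (fun z => f (Fin.cons z y)) (hinner_meas y) (c 0) (hc 0) ?_ t
      intro z z'
      have hupd : Function.update (Fin.cons z y : Fin (n+1) → χ) 0 z' = Fin.cons z' y := by
        exact @Fin.update_cons_zero _ (fun _ : Fin (n+1) => χ) z y z'
      have := hbd 0 (Fin.cons z y) z'
      rwa [hupd] at this
    -- bounded differences for h
    have hhbd : ∀ (j : Fin n) (y : Fin n → χ) (v : χ),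
        |h y - h (Function.update y j v)| ≤ c j.succ := by
      intro j y v
      have heq : h y - h (Function.update y j v)
          = ∫ z, (f (Fin.cons z y) - f (Fin.cons z (Function.update y j v))) ∂ν0 := by
        rw [integral_sub (hinner_int y) (hinner_int _)]
      rw [heq]
      calc |∫ z, (f (Fin.cons z y) - f (Fin.cons z (Function.update y j v))) ∂ν0|
          ≤ ∫ z, |f (Fin.cons z y) - f (Fin.cons z (Function.update y j v))| ∂ν0 :=
            abs_int_le _
        _ ≤ ∫ _ : χ, c j.succ ∂ν0 := by
            refine integral_mono ((hinner_int y).sub (hinner_int _)).abs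
              (integrable_const _) fun z => ?_
            have hupd : (Fin.cons z (Function.update y j v) : Fin (n+1) → χ)
                = Function.update (Fin.cons z y : Fin (n+1) → χ) j.succ v :=
              @Fin.cons_update n (fun _ : Fin (n+1) => χ) z y j v
            rw [hupd]
            exact hbd j.succ (Fin.cons z y) v
        _ = c j.succ := by simp
    -- integrability of the intermediate integrands over πt
    have hLHSmeas : Measurable (fun y => ∫ z, Real.exp (t * f (Fin.cons z y)) ∂ν0) := by
      have hFsm : StronglyMeasurable
          (fun q : (Fin n → χ) × χ => Real.exp (t * f (Fin.cons q.2 q.1))) := by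
        exact ((measurable_exp.comp ((measurable_const.mul
          (hfmeas'.comp (measurable_snd.prodMk measurable_fst)))))).stronglyMeasurable
      exact hFsm.integral_prod_right'.measurable
    have hinner_exp_int : ∀ y : Fin n → χ,
        Integrable (fun z : χ => Real.exp (t * f (Fin.cons z y))) ν0 := by
      intro y
      refine integrable_of_bounded' (((hinner_meas y).const_mul t).exp)
        (C := Real.exp (|t| * B)) fun z => ?_
      rw [abs_of_nonneg (exp_pos _).le, Real.exp_le_exp]
      calc t * f (Fin.cons z y) ≤ |t * f (Fin.cons z y)| := le_abs_self _
        _ = |t| * |f (Fin.cons z y)| := abs_mul _ _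
        _ ≤ |t| * B := mul_le_mul_of_nonneg_left (hfB _) (abs_nonneg t)
    have hLHSint : Integrable (fun y => ∫ z, Real.exp (t * f (Fin.cons z y)) ∂ν0) πt := by
      refine integrable_of_bounded' hLHSmeas (C := Real.exp (|t| * B)) fun y => ?_
      calc |∫ z, Real.exp (t * f (Fin.cons z y)) ∂ν0|
          ≤ ∫ z, |Real.exp (t * f (Fin.cons z y))| ∂ν0 := abs_int_le _
        _ ≤ ∫ _ : χ, Real.exp (|t| * B) ∂ν0 := by
            refine integral_mono (hinner_exp_int y).abs (integrable_const _) fun z => ?_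
            simp only [abs_of_nonneg (exp_pos _).le]
            rw [Real.exp_le_exp]
            calc t * f (Fin.cons z y) ≤ |t * f (Fin.cons z y)| := le_abs_self _
              _ = |t| * |f (Fin.cons z y)| := abs_mul _ _
              _ ≤ |t| * B := mul_le_mul_of_nonneg_left (hfB _) (abs_nonneg t)
        _ = Real.exp (|t| * B) := by simp
    have hRHSint : Integrable (fun y => Real.exp (t * h y + K0)) πt := by
      refine integrable_of_bounded' (((hhmeas.const_mul t).add_const K0).exp)
        (C := Real.exp (|t| * B + K0)) fun y => ?_
      rw [abs_of_nonneg (exp_pos _).le, Real.exp_le_exp]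
      have : t * h y ≤ |t| * B := by
        calc t * h y ≤ |t * h y| := le_abs_self _
          _ = |t| * |h y| := abs_mul _ _
          _ ≤ |t| * B := mul_le_mul_of_nonneg_left (hhB y) (abs_nonneg t)
      linarith
    -- put everything together
    have hmain : ∫ x, Real.exp (t * f x) ∂(Measure.pi ν)
        = ∫ y, ∫ z, Real.exp (t * f (Fin.cons z y)) ∂ν0 ∂πt := by
      rw [htrans (fun x => Real.exp (t * f x))]
      exact integral_prod_symm _ hExpInt
    have hmean : ∫ x, f x ∂(Measure.pi ν) = ∫ y, h y ∂πt := by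
      rw [htrans f]
      exact integral_prod_symm _ hfInt
    have hIH := ih νt (fun j => hν j.succ) h hhmeas (fun j => c j.succ)
      (fun j => hc j.succ) hhbd t
    calc ∫ x, Real.exp (t * f x) ∂(Measure.pi ν)
        = ∫ y, ∫ z, Real.exp (t * f (Fin.cons z y)) ∂ν0 ∂πt := hmain
      _ ≤ ∫ y, Real.exp (t * h y + K0) ∂πt :=
          integral_mono hLHSint hRHSint hstepA
      _ = Real.exp K0 * ∫ y, Real.exp (t * h y) ∂πt := by
          simp_rw [Real.exp_add, mul_comm (Real.exp (t * _)) (Real.exp K0)]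
          exact integral_const_mul _ _
      _ ≤ Real.exp K0 * Real.exp (t * ∫ y, h y ∂πt + t ^ 2 * (∑ j : Fin n, c j.succ ^ 2) / 8) :=
          mul_le_mul_of_nonneg_left hIH (exp_pos _).le
      _ = Real.exp (t * ∫ x, f x ∂(Measure.pi ν) + t ^ 2 * (∑ i, c i ^ 2) / 8) := by
          rw [← Real.exp_add, hmean, hK0]
          congr 1
          rw [Fin.sum_univ_succ (fun i => c i ^ 2)]
          ring

/-- McDiarmid's (bounded differences) inequality: if `X₁, …, Xₘ` are independent
`χ`-valued random variables and `f : χᵐ → ℝ` satisfies the bounded differences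
condition with constants `cᵢ`, then for every `ε > 0`,
`P(f(X) − E[f(X)] ≥ ε) ≤ exp(−2ε² / Σᵢ cᵢ²)`. -/
theorem mcdiarmid_inequality {Ω χ : Type*} {mΩ : MeasurableSpace Ω}
    [MeasurableSpace χ] (μ : Measure Ω) [IsProbabilityMeasure μ]
    (m : ℕ) (X : Fin m → Ω → χ)
    (hmeas : ∀ i, Measurable (X i))
    (hindep : iIndepFun X μ)
    (f : (Fin m → χ) → ℝ) (hf : Measurable f)
    (c : Fin m → ℝ) (hc : ∀ i, 0 < c i)
    (hbd : ∀ (i : Fin m) (x : Fin m → χ) (x' : χ),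
      |f x - f (Function.update x i x')| ≤ c i)
    (hint : Integrable (fun ω => f (fun i => X i ω)) μ)
    (ε : ℝ) (hε : 0 < ε) :
    (μ {ω | ε ≤ f (fun i => X i ω) - ∫ ω', f (fun i => X i ω') ∂μ}).toReal ≤
      Real.exp (-2 * ε ^ 2 / ∑ i, c i ^ 2) := by
  rcases Nat.eq_zero_or_pos m with hm | hm
  · subst hm
    have h1 : (∑ i : Fin 0, c i ^ 2) = 0 := by simp
    rw [h1, div_zero, Real.exp_zero]
    calc (μ _).toReal ≤ (μ Set.univ).toReal :=
          ENNReal.toReal_mono (measure_ne_top _ _) (measure_mono (Set.subset_univ _))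
      _ = 1 := by simp
  · -- m ≥ 1
    have hΩne : Nonempty Ω := by
      by_contra h
      rw [not_nonempty_iff] at h
      have h1 := measure_univ (μ := μ)
      rw [Set.univ_eq_empty_iff.2 h, measure_empty] at h1
      exact zero_ne_one h1
    haveI : Nonempty χ := ⟨X ⟨0, hm⟩ (Classical.arbitrary Ω)⟩
    set ν : Fin m → Measure χ := fun i => μ.map (X i) with hν
    haveI hνprob : ∀ i, IsProbabilityMeasure (ν i) :=
      fun i => Measure.isProbabilityMeasure_map (hmeas i).aemeasurable
    set F : Ω → (Fin m → χ) := fun ω i => X i ω with hF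
    have hFmeas : Measurable F := measurable_pi_iff.2 hmeas
    have hjoint : μ.map F = Measure.pi ν := by
      refine (Measure.pi_eq fun s hs => ?_).symm
      rw [Measure.map_apply hFmeas (MeasurableSet.univ_pi hs)]
      have hpre : F ⁻¹' Set.univ.pi s = ⋂ i, X i ⁻¹' s i := by
        ext ω
        simp [hF, Set.mem_univ_pi]
      rw [hpre, hindep.meas_iInter (fun i => ⟨s i, hs i, rfl⟩)]
      congr 1
      funext i
      rw [hν]
      exact (Measure.map_apply (hmeas i) (hs i)).symm
    -- transfer integrals
    have htrans : ∀ (G : (Fin m → χ) → ℝ), Measurable G →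
        ∫ ω, G (F ω) ∂μ = ∫ x, G x ∂(Measure.pi ν) := by
      intro G hG
      rw [← hjoint, integral_map hFmeas.aemeasurable hG.aestronglyMeasurable]
    set Ef : ℝ := ∫ ω', f (fun i => X i ω') ∂μ with hEf
    have hEf' : Ef = ∫ x, f x ∂(Measure.pi ν) := htrans f hf
    set S : ℝ := ∑ i, c i ^ 2 with hS
    have hS0 : 0 < S := by
      apply Finset.sum_pos (fun i _ => pow_pos (hc i) 2)
      exact ⟨⟨0, hm⟩, Finset.mem_univ _⟩
    set t : ℝ := 4 * ε / S with ht
    have ht0 : 0 < t := by positivity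
    -- boundedness of f
    obtain ⟨z₀⟩ := ‹Nonempty χ›
    set B : ℝ := |f (fun _ => z₀)| + ∑ i, c i with hB
    have hfB : ∀ x, |f x| ≤ B := by
      intro x
      have := osc_global m f c hbd x (fun _ => z₀)
      calc |f x| = |(f x - f (fun _ => z₀)) + f (fun _ => z₀)| := by ring_nf
        _ ≤ |f x - f (fun _ => z₀)| + |f (fun _ => z₀)| := abs_add_le _ _
        _ ≤ ∑ i, c i + |f (fun _ => z₀)| := by linarith
        _ = B := by rw [hB]; ring
    -- Chernoff
    set Y : Ω → ℝ := fun ω => f (F ω) - Ef with hY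
    have hYmeas : Measurable Y := (hf.comp hFmeas).sub_const Ef
    have hYB : ∀ ω, |Y ω| ≤ B + |Ef| := by
      intro ω
      calc |Y ω| ≤ |f (F ω)| + |Ef| := abs_sub _ _
        _ ≤ B + |Ef| := by linarith [hfB (F ω)]
    have hexpint : Integrable (fun ω => Real.exp (t * Y ω)) μ := by
      refine integrable_of_bounded' ((hYmeas.const_mul t).exp)
        (C := Real.exp (|t| * (B + |Ef|))) fun ω => ?_
      rw [abs_of_nonneg (exp_pos _).le, Real.exp_le_exp]
      calc t * Y ω ≤ |t * Y ω| := le_abs_self _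
        _ = |t| * |Y ω| := abs_mul _ _
        _ ≤ |t| * (B + |Ef|) := by
            refine mul_le_mul_of_nonneg_left (hYB ω) (abs_nonneg t)
    have hchernoff := measure_ge_le_exp_mul_mgf (X := Y) (μ := μ) (t := t) ε ht0.le hexpint
    -- bound the mgf
    have hmgf : mgf Y μ t ≤ Real.exp (t ^ 2 * S / 8) := by
      have h1 : mgf Y μ t = Real.exp (-(t * Ef)) * ∫ ω, Real.exp (t * f (F ω)) ∂μ := by
        rw [mgf]
        rw [show (fun ω => Real.exp (t * Y ω))
            = fun ω => Real.exp (-(t * Ef)) * Real.exp (t * f (F ω)) from funext fun ω => by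
          rw [← Real.exp_add, hY]; ring_nf]
        exact integral_const_mul _ _
      rw [h1, htrans (fun x => Real.exp (t * f x)) ((hf.const_mul t).exp)]
      have h2 := mgf_pi m ν hνprob f hf c (fun i => (hc i).le) hbd t
      calc Real.exp (-(t * Ef)) * ∫ x, Real.exp (t * f x) ∂(Measure.pi ν)
          ≤ Real.exp (-(t * Ef)) *
            Real.exp (t * ∫ x, f x ∂(Measure.pi ν) + t ^ 2 * (∑ i, c i ^ 2) / 8) :=
            mul_le_mul_of_nonneg_left h2 (exp_pos _).le
        _ = Real.exp (t ^ 2 * S / 8) := by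
            rw [← Real.exp_add, ← hEf', ← hS]; ring_nf
    calc (μ {ω | ε ≤ f (fun i => X i ω) - Ef}).toReal
        = (μ {ω | ε ≤ Y ω}).toReal := rfl
      _ ≤ Real.exp (-t * ε) * mgf Y μ t := hchernoff
      _ ≤ Real.exp (-t * ε) * Real.exp (t ^ 2 * S / 8) :=
          mul_le_mul_of_nonneg_left hmgf (exp_pos _).le
      _ = Real.exp (-t * ε + t ^ 2 * S / 8) := by rw [← Real.exp_add]
      _ = Real.exp (-2 * ε ^ 2 / S) := by
          congr 1
          rw [ht]
          field_simp
          ring
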